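/- Let (M,g) be a complete Riemannian manifold, p ∈ M, and q a point in the cut locus of p such that there exist two distinct minimal geodesic segments γ₁, γ₂ from p to q. Then for every open neighborhood U of q, there is no continuous map s : {p} × U → GM assigning to each (p,x) a minimal geodesic segment from p to x, where GM ⊂ C⁰([0,1],M) carries the compact-open topology. -/

import Mathlib

open unitInterval

/-- A minimal geodesic segment in a metric space (with the Riemannian distance this is
exactly a length-minimizing geodesic segment parametrized proportionally to arc
length): `d(γ s, γ t) = |s − t| · d(γ 0, γ 1)` for all `s, t ∈ [0,1]`. -/
def IsMinGeodesic {M : Type*} [MetricSpace M] (γ : C(unitInterval, M)) : Prop :=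
  ∀ s t : unitInterval, dist (γ s) (γ t) = |(s : ℝ) - (t : ℝ)| * dist (γ 0) (γ 1)

/-- The restriction of `γ` to `[0,t]`, reparametrized on `[0,1]`: `s ↦ γ (t·s)`. -/
noncomputable def geodRestrict {M : Type*} [MetricSpace M] (γ : C(unitInterval, M))
    (t : unitInterval) : C(unitInterval, M) :=
  ⟨fun s => γ (Set.projIcc 0 1 zero_le_one ((t : ℝ) * (s : ℝ))),
    γ.continuous.comp (continuous_projIcc.comp
      (continuous_const.mul continuous_subtype_val))⟩

/- STATEMENT 11.
`(M,g)` is a complete Riemannian manifold with Riemannian distance `dist`, `p ∈ M`, and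
`q` is a point of the cut locus of `p` admitting two distinct minimal geodesic segments
`g 0, g 1` from `p` to `q`.  The hypothesis `huniq` records the Riemannian fact that for
`t < 1` the points `g i (t)` lie before the cut point, so the minimal geodesic segment
from `p` to `g i (t)` is *unique*, namely the reparametrized restriction of `g i`.
Conclusion: for every open neighborhood `U` of `q` there is no continuous geodesic
motion planner on `{p} × U`, i.e. no map `s` assigning continuously (for the
compact-open topology on `GM ⊂ C([0,1],M)`) to each `x ∈ U` a minimal geodesic segment
from `p` to `x`. -/
theorem no_continuous_geodesic_planner {M : Type*} [MetricSpace M]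
    (p q : M) (g : Fin 2 → C(unitInterval, M))
    (hmin : ∀ i, IsMinGeodesic (g i))
    (h0 : ∀ i, g i 0 = p) (h1 : ∀ i, g i 1 = q)
    (hne : g 0 ≠ g 1)
    (huniq : ∀ (i : Fin 2) (t : unitInterval), t ≠ 1 →
      ∀ c : C(unitInterval, M), IsMinGeodesic c → c 0 = p → c 1 = g i t →
        c = geodRestrict (g i) t)
    (U : Set M) (hU : IsOpen U) (hq : q ∈ U) :
    ¬ ∃ s : M → C(unitInterval, M), ContinuousOn s U ∧
        ∀ x ∈ U, IsMinGeodesic (s x) ∧ s x 0 = p ∧ s x 1 = x := by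
  rintro ⟨s, hs, hplan⟩
  have key : ∀ i : Fin 2, s q = g i := by
    intro i
    ext s₀
    set L := nhdsWithin (1:ℝ) (Set.Iio 1) with hL
    set T : ℝ → unitInterval := fun r => Set.projIcc 0 1 zero_le_one r with hT
    have hTcont : Continuous T := continuous_projIcc
    have hT1 : T 1 = 1 := by
      simp only [hT]
      exact Set.projIcc_right zero_le_one
    have hTtend : Filter.Tendsto T L (nhds 1) := by
      have h2 : ContinuousWithinAt T (Set.Iio 1) 1 := hTcont.continuousWithinAt
      rw [hL, ← hT1]
      exact h2
    have hTne : ∀ r ∈ Set.Iio (1:ℝ), T r ≠ 1 := by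
      intro r hr
      intro hcontra
      have heq : ((T r : unitInterval) : ℝ) = 1 := by rw [hcontra]; rfl
      rw [hT] at heq
      simp only [Set.coe_projIcc] at heq
      have h1' : min 1 r ≤ r := min_le_right _ _
      have hlt : max 0 (min 1 r) < 1 :=
        max_lt one_pos (lt_of_le_of_lt h1' hr)
      exact hlt.ne heq
    -- tendsto of g i ∘ T to q within U
    have hgT : Filter.Tendsto (fun r => g i (T r)) L (nhds q) := by
      have := ((g i).continuous.tendsto 1).comp hTtend
      rwa [h1 i] at this
    have hmemU : ∀ᶠ r in L, g i (T r) ∈ U := hgT.eventually (hU.mem_nhds hq)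
    have hgTU : Filter.Tendsto (fun r => g i (T r)) L (nhdsWithin q U) :=
      tendsto_nhdsWithin_iff.mpr ⟨hgT, hmemU⟩
    -- A : s (g i (T r)) s₀ → s q s₀
    have hA : Filter.Tendsto (fun r => s (g i (T r)) s₀) L (nhds (s q s₀)) := by
      have hsq : Filter.Tendsto s (nhdsWithin q U) (nhds (s q)) := hs q hq
      exact ((continuous_eval_const s₀).tendsto (s q)).comp (hsq.comp hgTU)
    -- C : the restricted geodesics converge to g i s₀
    have hC : Filter.Tendsto
        (fun r => g i (Set.projIcc 0 1 zero_le_one ((T r : ℝ) * (s₀ : ℝ)))) L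
        (nhds (g i s₀)) := by
      have hc : Continuous fun t : unitInterval =>
          g i (Set.projIcc 0 1 zero_le_one ((t : ℝ) * (s₀ : ℝ))) :=
        (g i).continuous.comp (continuous_projIcc.comp
          (continuous_subtype_val.mul continuous_const))
      have := (hc.tendsto 1).comp hTtend
      simpa [Set.projIcc_val, Function.comp_def] using this
    -- B : eventual equality via uniqueness
    have hB : ∀ᶠ r in L, s (g i (T r)) s₀
        = g i (Set.projIcc 0 1 zero_le_one ((T r : ℝ) * (s₀ : ℝ))) := by
      filter_upwards [hmemU, self_mem_nhdsWithin] with r hrU hrlt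
      have hp := hplan _ hrU
      have := huniq i (T r) (hTne r hrlt) (s (g i (T r))) hp.1 hp.2.1 hp.2.2
      calc s (g i (T r)) s₀ = geodRestrict (g i) (T r) s₀ := by rw [this]
        _ = _ := rfl
    have hA' : Filter.Tendsto
        (fun r => g i (Set.projIcc 0 1 zero_le_one ((T r : ℝ) * (s₀ : ℝ)))) L
        (nhds (s q s₀)) := hA.congr' hB
    exact tendsto_nhds_unique hA' hC
  exact hne ((key 0).symm.trans (key 1))
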